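/- Let ε₀, ε₁, μ₀, μ₁ be complex numbers with μ₀μ₁ε₀ε₁ ≠ 0 and (μ₀+μ₁)(ε₀+ε₁) ≠ 0. Then the 4×4 block matrix with rows [−√μ₁/4, √μ₀/4, 0, 0], [0, 0, √ε₁/4, −√ε₀/4], [0, 0, μ₁√ε₁/2, μ₀√ε₀/2], [−√μ₁ε₁/2, −√μ₀ε₀/2, 0, 0] acting on (r₁, r₀, q₁, q₀) is invertible. -/

import Mathlib

/-- The leading-order 4×4 symbol matrix of the dielectric system is invertible
provided `μ₀μ₁ε₀ε₁ ≠ 0` and `(μ₀+μ₁)(ε₀+ε₁) ≠ 0`.  Here `sμ_l, sε_l` denote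
the square roots `√μ_l, √ε_l`. -/
theorem dielectric_symbol_invertible
    (ε0 ε1 μ0 μ1 sε0 sε1 sμ0 sμ1 : ℂ)
    (hsε0 : sε0 ^ 2 = ε0) (hsε1 : sε1 ^ 2 = ε1)
    (hsμ0 : sμ0 ^ 2 = μ0) (hsμ1 : sμ1 ^ 2 = μ1)
    (h1 : μ0 * μ1 * ε0 * ε1 ≠ 0) (h2 : (μ0 + μ1) * (ε0 + ε1) ≠ 0) :
    IsUnit (!![-sμ1 / 4, sμ0 / 4, 0, 0;
               0, 0, sε1 / 4, -sε0 / 4;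
               0, 0, μ1 * sε1 / 2, μ0 * sε0 / 2;
               -sμ1 * ε1 / 2, -sμ0 * ε0 / 2, 0, 0] : Matrix (Fin 4) (Fin 4) ℂ) := by
  rw [Matrix.isUnit_iff_isUnit_det, isUnit_iff_ne_zero]
  have hμ0 : sμ0 ≠ 0 := fun h => by simp [← hsμ0, h] at h1
  have hμ1 : sμ1 ≠ 0 := fun h => by simp [← hsμ1, h] at h1
  have hε0 : sε0 ≠ 0 := fun h => by simp [← hsε0, h] at h1
  have hε1 : sε1 ≠ 0 := fun h => by simp [← hsε1, h] at h1
  have hdet : (!![-sμ1 / 4, sμ0 / 4, 0, 0;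
               0, 0, sε1 / 4, -sε0 / 4;
               0, 0, μ1 * sε1 / 2, μ0 * sε0 / 2;
               -sμ1 * ε1 / 2, -sμ0 * ε0 / 2, 0, 0] : Matrix (Fin 4) (Fin 4) ℂ).det =
      sμ0 * sμ1 * sε0 * sε1 * ((μ0 + μ1) * (ε0 + ε1)) / 64 := by
    subst hsε0 hsε1 hsμ0 hsμ1
    simp [Matrix.det_succ_row_zero, Fin.sum_univ_succ, Fin.succAbove]
    ring
  rw [hdet]
  exact div_ne_zero (by
    refine mul_ne_zero (mul_ne_zero (mul_ne_zero (mul_ne_zero ?_ ?_) ?_) ?_) h2 <;> assumption)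
    (by norm_num)
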